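/- For every α > 1 there exists a constant c(α) > 0 such that for all u, v ∈ ℝ^N one has |v − u|^α ≤ c(α) |⟦v⟧^α − ⟦u⟧^α|. -/

import Mathlib

open Real

/-- The power `⟦w⟧^α := |w|^{α−1} w` (with `⟦0⟧^α = 0`). -/
noncomputable def vpow {N : ℕ} (α : ℝ) (w : EuclideanSpace ℝ (Fin N)) :
    EuclideanSpace ℝ (Fin N) :=
  ‖w‖ ^ (α - 1) • w

/-- Scalar key inequality: with `X = P*B`, `Y = Q*A` playing the roles of
`B^α`, `A^α`, affine interpolation in `s`. -/
lemma key_ineq (P Q A B s : ℝ) (hA : 0 ≤ A) (hAB : A ≤ B) (hQ : 0 ≤ Q)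
    (hQP : Q ≤ P) (hs : |s| ≤ A * B) (hdiff : P * (B - A) ≤ P * B - Q * A) :
    (1/4) * P^2 * (A^2 + B^2 - 2*s) ≤ P^2 * B^2 - 2*(P*Q)*s + Q^2 * A^2 := by
  obtain ⟨hs1, hs2⟩ := abs_le.mp hs
  have hP : 0 ≤ P := le_trans hQ hQP
  rcases eq_or_lt_of_le hA with hA0 | hA0
  · -- A = 0, so s = 0
    have hA0' : A = 0 := hA0.symm
    have hs0 : s = 0 := le_antisymm (by nlinarith) (by nlinarith)
    subst hA0' hs0
    nlinarith [sq_nonneg (P*B), sq_nonneg Q]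
  · have hB0 : 0 < B := lt_of_lt_of_le hA0 hAB
    have hAB0 : 0 < A * B := mul_pos hA0 hB0
    have hPBA : 0 ≤ P * (B - A) := mul_nonneg hP (by linarith)
    have fpos : 0 ≤ (P*B - Q*A)^2 - (1/4) * P^2 * (B - A)^2 := by
      nlinarith [sq_nonneg (P*(B-A))]
    have fneg : 0 ≤ (P*B + Q*A)^2 - (1/4) * P^2 * (A + B)^2 := by
      nlinarith [mul_nonneg hQ hA, mul_nonneg hP hA, mul_nonneg hP hB0.le,
        mul_nonneg (mul_nonneg hP hA) (mul_nonneg hP hB0.le)]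
    nlinarith [mul_nonneg (by linarith : (0:ℝ) ≤ A*B - s) fneg,
      mul_nonneg (by linarith : (0:ℝ) ≤ A*B + s) fpos]

lemma main_est {N : ℕ} (α : ℝ) (hα : 1 < α) (u v : EuclideanSpace ℝ (Fin N))
    (h : ‖u‖ ≤ ‖v‖) :
    ‖v - u‖ ^ α ≤ (2:ℝ) ^ α * ‖vpow α v - vpow α u‖ := by
  set A := ‖u‖ with hA
  set B := ‖v‖ with hB
  set d := ‖v - u‖ with hd
  set D := ‖vpow α v - vpow α u‖ with hD
  have hA0 : 0 ≤ A := norm_nonneg _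
  have hB0 : 0 ≤ B := norm_nonneg _
  have hd0 : 0 ≤ d := norm_nonneg _
  have hD0 : 0 ≤ D := norm_nonneg _
  set s : ℝ := inner ℝ v u with hs
  set P := B ^ (α - 1) with hP
  set Q := A ^ (α - 1) with hQ
  have hP0 : 0 ≤ P := rpow_nonneg hB0 _
  have hQ0 : 0 ≤ Q := rpow_nonneg hA0 _
  have hQP : Q ≤ P := rpow_le_rpow hA0 h (by linarith)
  have hsabs : |s| ≤ A * B := by
    rw [mul_comm]
    exact abs_real_inner_le_norm v u
  have hd2 : d ^ 2 = B ^ 2 - 2 * s + A ^ 2 := by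
    rw [hd, @norm_sub_sq_real]
  have hD2 : D ^ 2 = P ^ 2 * B ^ 2 - 2 * (P * Q) * s + Q ^ 2 * A ^ 2 := by
    rw [hD, @norm_sub_sq_real, vpow, vpow]
    rw [norm_smul, norm_smul]
    rw [real_inner_smul_left, real_inner_smul_right]
    simp only [Real.norm_eq_abs, abs_of_nonneg hP0, abs_of_nonneg hQ0, ← hA, ← hB, ← hP, ← hQ,
      ← hs]
    ring
  have hdiff : P * (B - A) ≤ P * B - Q * A := by
    have : Q * A ≤ P * A := mul_le_mul_of_nonneg_right hQP hA0
    nlinarith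
  have key := key_ineq P Q A B s hA0 h hQ0 hQP hsabs hdiff
  have h1 : (1/2 * (P * d)) ^ 2 ≤ D ^ 2 := by
    have e : (1/2 * (P * d)) ^ 2 = 1/4 * P^2 * d^2 := by ring
    rw [e, hd2, hD2]
    linarith [key]
  have h2 : 1/2 * (P * d) ≤ D :=
    le_of_sq_le_sq (by nlinarith [mul_nonneg hP0 hd0]) hD0 |>.trans_eq rfl
  -- d/2 ≤ B
  have hdB : d / 2 ≤ B := by
    have := norm_sub_le v u
    rw [← hd, ← hA, ← hB] at this
    linarith
  have h3 : (d/2) ^ (α - 1) ≤ P := rpow_le_rpow (by linarith) hdB (by linarith)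
  rcases eq_or_lt_of_le hd0 with hd00 | hd00
  · -- d = 0
    have : d ^ α = 0 := by
      rw [← hd00, Real.zero_rpow (by linarith)]
    rw [this]
    exact mul_nonneg (rpow_nonneg (by norm_num) _) hD0
  · have hdα : d ^ α = 2 ^ (α - 1) * ((d/2) ^ (α - 1) * d) := by
      rw [← mul_assoc, ← Real.mul_rpow (by norm_num) (by linarith : (0:ℝ) ≤ d/2)]
      have e2 : (2:ℝ) * (d/2) = d := by ring
      rw [e2]
      calc d ^ α = d ^ (α - 1 + 1) := by ring_nf
        _ = d ^ (α - 1) * d := Real.rpow_add_one (ne_of_gt hd00) _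
    have h2α : (2:ℝ) ^ α = 2 ^ (α - 1) * 2 := by
      calc (2:ℝ) ^ α = 2 ^ (α - 1 + 1) := by ring_nf
        _ = 2 ^ (α - 1) * 2 := Real.rpow_add_one (by norm_num) _
    have h2pos : (0:ℝ) ≤ (2:ℝ) ^ (α - 1) := rpow_nonneg (by norm_num) _
    rw [hdα, h2α]
    have step1 : (d/2) ^ (α - 1) * d ≤ P * d := mul_le_mul_of_nonneg_right h3 hd0
    have step2 : P * d ≤ 2 * D := by linarith
    calc 2 ^ (α - 1) * ((d/2) ^ (α - 1) * d) ≤ 2 ^ (α - 1) * (2 * D) := by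
          apply mul_le_mul_of_nonneg_left (step1.trans step2) h2pos
      _ = 2 ^ (α - 1) * 2 * D := by ring

/-- For every `α > 1` there exists a constant `c(α) > 0` such that for all `u, v ∈ ℝ^N`,
`|v − u|^α ≤ c(α) |⟦v⟧^α − ⟦u⟧^α|`. -/
theorem power_alpha_diff_estimate (N : ℕ) (α : ℝ) (hα : 1 < α) :
    ∃ c : ℝ, 0 < c ∧ ∀ u v : EuclideanSpace ℝ (Fin N),
      ‖v - u‖ ^ α ≤ c * ‖vpow α v - vpow α u‖ := by
  refine ⟨(2:ℝ) ^ α, rpow_pos_of_pos (by norm_num) _, fun u v => ?_⟩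
  rcases le_total ‖u‖ ‖v‖ with h | h
  · exact main_est α hα u v h
  · rw [norm_sub_rev v, norm_sub_rev (vpow α v)]
    exact main_est α hα v u h
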